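/- Let γ > 1 and let two ideal-MHD states (ρ_L,u_L,v_L,w_L,p_L,B_{1,L},B_{2,L},B_{3,L}) and (ρ_R,u_R,v_R,w_R,p_R,B_{1,R},B_{2,R},B_{3,R}) satisfy ρ_L,ρ_R,p_L,p_R > 0, ρ_L ≠ ρ_R, and β_L ≠ β_R where β = ρ/(2p). Define the KEPEC numerical flux f̂ ∈ ℝ⁸ by: f̂₁ = ρ^ln⟨u⟩; f̂₂ = ρ^ln⟨u⟩² + ⟨ρ⟩/(2⟨β⟩) + ½(⟨B₁²⟩ + ⟨B₂²⟩ + ⟨B₃²⟩) − ⟨B₁²⟩; f̂₃ = ρ^ln⟨u⟩⟨v⟩ − ⟨B₁B₂⟩; f̂₄ = ρ^ln⟨u⟩⟨w⟩ − ⟨B₁B₃⟩; f̂₅ = (⟨u⟩/2)(ρ^ln/(β^ln(γ−1)) + ⟨ρ⟩/⟨β⟩) + (ρ^ln⟨u⟩/2)(2(⟨u⟩² + ⟨v⟩² + ⟨w⟩²) − (⟨u²⟩ + ⟨v²⟩ + ⟨w²⟩)) + (⟨u⟩/2)(⟨B₁²⟩ + ⟨B₂²⟩ + ⟨B₃²⟩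 + 2(⟨B₂⟩² + ⟨B₃⟩²)) − ⟨u⟩⟨B₁²⟩ − ⟨v⟩⟨B₁B₂⟩ − ⟨w⟩⟨B₁B₃⟩ − ⟨v⟩⟨B₁⟩⟨B₂⟩ − ⟨w⟩⟨B₁⟩⟨B₃⟩ + ⟨uB₁²⟩ + ⟨vB₁B₂⟩ + ⟨wB₁B₃⟩ − ½(⟨uB₁²⟩ + ⟨uB₂²⟩ + ⟨uB₃²⟩); f̂₆ = 0; f̂₇ = ⟨u⟩⟨B₂⟩ − ⟨v⟩⟨B₁⟩; f̂₈ = ⟨u⟩⟨B₃⟩ − ⟨w⟩⟨B₁⟩. Then f̂ satisfies the discrete entropy conservation condition with the discretized Janhunen source term: ⟦v⟧ · f̂ = ⟦ρu⟧ + ⟦βu(B₁² + B₂² + B₃²)⟧ − 2⟦βB₁(uB₁ + vB₂ + wB₃)⟧ + 2⟨β⟩⟦B₁⟧(⟨u⟩⟨B₁⟩ + ⟨v⟩⟨B₂⟩ + ⟨w⟩⟨B₃⟩). -/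

import Mathlib

open Matrix

noncomputable section

/-- Arithmetic mean of a pair of states. -/
def am (x y : ℝ) : ℝ := (x + y) / 2

/-- Logarithmic mean of a pair of (positive, distinct) states. -/
noncomputable def lnM (x y : ℝ) : ℝ := (x - y) / (Real.log x - Real.log y)

set_option maxHeartbeats 1000000 in
lemma kepec_core (ρL uL vL wL βL B1L B2L B3L ρR uR vR wR βR B1R B2R B3R R : ℝ)
    (hs : βL + βR ≠ 0) :
    (ρR - ρL) * am uL uR
      - (βR * (uR ^ 2 + vR ^ 2 + wR ^ 2) - βL * (uL ^ 2 + vL ^ 2 + wL ^ 2)) * (R * am uL uR)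
      + (2 * βR * uR - 2 * βL * uL) *
        (R * am uL uR ^ 2 + am ρL ρR / (2 * am βL βR)
          + (am (B1L ^ 2) (B1R ^ 2) + am (B2L ^ 2) (B2R ^ 2) + am (B3L ^ 2) (B3R ^ 2)) / 2
          - am (B1L ^ 2) (B1R ^ 2))
      + (2 * βR * vR - 2 * βL * vL) * (R * am uL uR * am vL vR - am (B1L * B2L) (B1R * B2R))
      + (2 * βR * wR - 2 * βL * wL) * (R * am uL uR * am wL wR - am (B1L * B3L) (B1R * B3R))
      + (-(2 * βR) - -(2 * βL)) *
        (am uL uR / 2 * (am ρL ρR / am βL βR)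
          + R * am uL uR / 2 *
            (2 * (am uL uR ^ 2 + am vL vR ^ 2 + am wL wR ^ 2)
              - (am (uL ^ 2) (uR ^ 2) + am (vL ^ 2) (vR ^ 2) + am (wL ^ 2) (wR ^ 2)))
          + am uL uR / 2 *
            (am (B1L ^ 2) (B1R ^ 2) + am (B2L ^ 2) (B2R ^ 2) + am (B3L ^ 2) (B3R ^ 2)
              + 2 * (am B2L B2R ^ 2 + am B3L B3R ^ 2))
          - am uL uR * am (B1L ^ 2) (B1R ^ 2) - am vL vR * am (B1L * B2L) (B1R * B2R)
          - am wL wR * am (B1L * B3L) (B1R * B3R) - am vL vR * am B1L B1R * am B2L B2R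
          - am wL wR * am B1L B1R * am B3L B3R
          + am (uL * B1L ^ 2) (uR * B1R ^ 2) + am (vL * B1L * B2L) (vR * B1R * B2R)
          + am (wL * B1L * B3L) (wR * B1R * B3R)
          - (am (uL * B1L ^ 2) (uR * B1R ^ 2) + am (uL * B2L ^ 2) (uR * B2R ^ 2)
              + am (uL * B3L ^ 2) (uR * B3R ^ 2)) / 2)
      + (2 * βR * B1R - 2 * βL * B1L) * 0
      + (2 * βR * B2R - 2 * βL * B2L) * (am uL uR * am B2L B2R - am vL vR * am B1L B1R)
      + (2 * βR * B3R - 2 * βL * B3L) * (am uL uR * am B3L B3R - am wL wR * am B1L B1R) =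
      (ρR * uR - ρL * uL)
        + (βR * uR * (B1R ^ 2 + B2R ^ 2 + B3R ^ 2) - βL * uL * (B1L ^ 2 + B2L ^ 2 + B3L ^ 2))
        - 2 * (βR * B1R * (uR * B1R + vR * B2R + wR * B3R)
            - βL * B1L * (uL * B1L + vL * B2L + wL * B3L))
        + 2 * am βL βR * (B1R - B1L) *
            (am uL uR * am B1L B1R + am vL vR * am B2L B2R + am wL wR * am B3L B3R) := by
  simp only [am]
  have h2 : βL + βR ≠ 0 := hs
  field_simp
  ring

lemma kepec_hY (γ ρL pL ρR pR uL uR : ℝ) (hg : γ - 1 ≠ 0)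
    (hab : Real.log ρL - Real.log ρR ≠ 0)
    (hβ' : ρL / (2 * pL) - ρR / (2 * pR) ≠ 0) :
    (-(2 * (ρR / (2 * pR))) - -(2 * (ρL / (2 * pL)))) *
      (am uL uR / 2 * ((ρL - ρR) / (Real.log ρL - Real.log ρR) /
        ((ρL / (2 * pL) - ρR / (2 * pR)) /
            (Real.log (ρL / (2 * pL)) - Real.log (ρR / (2 * pR))) * (γ - 1))))
      = (Real.log (ρL / (2 * pL)) - Real.log (ρR / (2 * pR))) / (γ - 1) *
          ((ρL - ρR) / (Real.log ρL - Real.log ρR)) * am uL uR := by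
  generalize hx : ρL / (2 * pL) = x at *
  generalize hy : ρR / (2 * pR) = y at *
  rw [show -(2 * y) - -(2 * x) = 2 * (x - y) by ring, div_mul_eq_div_div, div_div_div_eq]
  field_simp

set_option maxHeartbeats 1000000 in
/-- the KEPEC numerical flux satisfies the discrete entropy conservation
condition with the discretized Janhunen source term. -/
theorem kepec_flux_discrete_entropy_conservation
    (γ ρL uL vL wL pL B1L B2L B3L ρR uR vR wR pR B1R B2R B3R : ℝ)
    (hγ : 1 < γ) (hρL : 0 < ρL) (hρR : 0 < ρR) (hpL : 0 < pL) (hpR : 0 < pR)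
    (hρ : ρL ≠ ρR) (hβ : ρL / (2 * pL) ≠ ρR / (2 * pR)) :
    let βL := ρL / (2 * pL)
    let βR := ρR / (2 * pR)
    let sL := Real.log pL - γ * Real.log ρL
    let sR := Real.log pR - γ * Real.log ρR
    let vL8 : Fin 8 → ℝ :=
      ![(γ - sL) / (γ - 1) - βL * (uL ^ 2 + vL ^ 2 + wL ^ 2), 2 * βL * uL, 2 * βL * vL,
        2 * βL * wL, -(2 * βL), 2 * βL * B1L, 2 * βL * B2L, 2 * βL * B3L]
    let vR8 : Fin 8 → ℝ :=
      ![(γ - sR) / (γ - 1) - βR * (uR ^ 2 + vR ^ 2 + wR ^ 2), 2 * βR * uR, 2 * βR * vR,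
        2 * βR * wR, -(2 * βR), 2 * βR * B1R, 2 * βR * B2R, 2 * βR * B3R]
    let ρln := lnM ρL ρR
    let βln := lnM βL βR
    let au := am uL uR
    let av := am vL vR
    let aw := am wL wR
    let aρ := am ρL ρR
    let aβ := am βL βR
    let aB1 := am B1L B1R
    let aB2 := am B2L B2R
    let aB3 := am B3L B3R
    let aB1sq := am (B1L ^ 2) (B1R ^ 2)
    let aB2sq := am (B2L ^ 2) (B2R ^ 2)
    let aB3sq := am (B3L ^ 2) (B3R ^ 2)
    let aB1B2 := am (B1L * B2L) (B1R * B2R)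
    let aB1B3 := am (B1L * B3L) (B1R * B3R)
    let au2 := am (uL ^ 2) (uR ^ 2)
    let av2 := am (vL ^ 2) (vR ^ 2)
    let aw2 := am (wL ^ 2) (wR ^ 2)
    let auB1sq := am (uL * B1L ^ 2) (uR * B1R ^ 2)
    let auB2sq := am (uL * B2L ^ 2) (uR * B2R ^ 2)
    let auB3sq := am (uL * B3L ^ 2) (uR * B3R ^ 2)
    let avB1B2 := am (vL * B1L * B2L) (vR * B1R * B2R)
    let awB1B3 := am (wL * B1L * B3L) (wR * B1R * B3R)
    let f5 :=
      au / 2 * (ρln / (βln * (γ - 1)) + aρ / aβ)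
        + ρln * au / 2 * (2 * (au ^ 2 + av ^ 2 + aw ^ 2) - (au2 + av2 + aw2))
        + au / 2 * (aB1sq + aB2sq + aB3sq + 2 * (aB2 ^ 2 + aB3 ^ 2))
        - au * aB1sq - av * aB1B2 - aw * aB1B3 - av * aB1 * aB2 - aw * aB1 * aB3
        + auB1sq + avB1B2 + awB1B3 - (auB1sq + auB2sq + auB3sq) / 2
    let fhat : Fin 8 → ℝ :=
      ![ρln * au,
        ρln * au ^ 2 + aρ / (2 * aβ) + (aB1sq + aB2sq + aB3sq) / 2 - aB1sq,
        ρln * au * av - aB1B2,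
        ρln * au * aw - aB1B3,
        f5,
        0,
        au * aB2 - av * aB1,
        au * aB3 - aw * aB1]
    (fun i => vR8 i - vL8 i) ⬝ᵥ fhat =
      (ρR * uR - ρL * uL)
        + (βR * uR * (B1R ^ 2 + B2R ^ 2 + B3R ^ 2)
            - βL * uL * (B1L ^ 2 + B2L ^ 2 + B3L ^ 2))
        - 2 * (βR * B1R * (uR * B1R + vR * B2R + wR * B3R)
            - βL * B1L * (uL * B1L + vL * B2L + wL * B3L))
        + 2 * aβ * (B1R - B1L) * (au * aB1 + av * aB2 + aw * aB3) := by
  have hg : γ - 1 ≠ 0 := by linarith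
  have h2pL : (2:ℝ) * pL ≠ 0 := by positivity
  have h2pR : (2:ℝ) * pR ≠ 0 := by positivity
  have hβL : (0:ℝ) < ρL / (2 * pL) := by positivity
  have hβR : (0:ℝ) < ρR / (2 * pR) := by positivity
  have hab : Real.log ρL - Real.log ρR ≠ 0 :=
    sub_ne_zero.mpr fun h => hρ (by rw [← Real.exp_log hρL, h, Real.exp_log hρR])
  have hcd : Real.log (ρL / (2 * pL)) - Real.log (ρR / (2 * pR)) ≠ 0 :=
    sub_ne_zero.mpr fun h => hβ (by rw [← Real.exp_log hβL, h, Real.exp_log hβR])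
  have hβ' : ρL / (2 * pL) - ρR / (2 * pR) ≠ 0 := sub_ne_zero.mpr hβ
  have hsum : ρL / (2 * pL) + ρR / (2 * pR) ≠ 0 := by positivity
  have hlpL : Real.log pL = Real.log ρL - Real.log 2 - Real.log (ρL / (2 * pL)) := by
    rw [Real.log_div hρL.ne' h2pL, Real.log_mul two_ne_zero hpL.ne']; ring
  have hlpR : Real.log pR = Real.log ρR - Real.log 2 - Real.log (ρR / (2 * pR)) := by
    rw [Real.log_div hρR.ne' h2pR, Real.log_mul two_ne_zero hpR.ne']; ring
  have hcore := kepec_core ρL uL vL wL (ρL / (2 * pL)) B1L B2L B3L ρR uR vR wR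
    (ρR / (2 * pR)) B1R B2R B3R ((ρL - ρR) / (Real.log ρL - Real.log ρR)) hsum
  have hX : (γ - ((Real.log ρR - Real.log 2 - Real.log (ρR / (2 * pR))) - γ * Real.log ρR))
        / (γ - 1)
      - (γ - ((Real.log ρL - Real.log 2 - Real.log (ρL / (2 * pL))) - γ * Real.log ρL))
        / (γ - 1)
      = (Real.log ρR - Real.log ρL)
        + (Real.log (ρR / (2 * pR)) - Real.log (ρL / (2 * pL))) / (γ - 1) := by
    field_simp
    ring
  have hXR : (ρL - ρR) / (Real.log ρL - Real.log ρR) * (Real.log ρR - Real.log ρL)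
      = ρR - ρL := by
    rw [div_mul_eq_mul_div, div_eq_iff hab]; ring
  have hY := kepec_hY γ ρL pL ρR pR uL uR hg hab hβ'
  simp only [lnM, dotProduct, Fin.sum_univ_succ, Fin.sum_univ_zero,
    Matrix.cons_val_zero, Matrix.cons_val_succ, add_zero]
  rw [hlpL, hlpR]
  linear_combination hcore
    + (ρL - ρR) / (Real.log ρL - Real.log ρR) * am uL uR * hX
    + am uL uR * hXR + hY

end
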